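/- Let C₁ ∪ ⋯ ∪ C_m be a 2-factor of a graph G with the minimum number m ≥ 2 of cycles. If u lies on C_i, v lies on C_j with i ≠ j, and uv ∈ E(G), then there is no edge between the set of the two neighbors of u on C_i and the set of the two neighbors of v on C_j. -/

import Mathlib

/-- The union of all pairwise common neighborhoods of distinct members of `S` in `G`. -/
def commonUnionG {V : Type*} (G : SimpleGraph V) (S : Set V) : Set V :=
  {w | ∃ u ∈ S, ∃ v ∈ S, u ≠ v ∧ G.Adj u w ∧ G.Adj v w}

/-- A graph is s-quadrangular if for every set `S` of at least two vertices in
which every member shares a neighbor with another member, the union of all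
pairwise common neighborhoods has size at least `|S|`. -/
def SQuadG {V : Type*} (G : SimpleGraph V) : Prop :=
  ∀ S : Set V, 2 ≤ S.ncard →
    (∀ u ∈ S, ∃ v ∈ S, v ≠ u ∧ (G.neighborSet u ∩ G.neighborSet v).Nonempty) →
    S.ncard ≤ (commonUnionG G S).ncard

/-- A 2-factor of `G`, encoded as a permutation `σ` that follows edges of `G`
and has all cycles of length at least 3; its cycles are the vertex-disjoint
cycles of the 2-factor, and the two neighbors of `u` on its cycle are `σ u`
and `σ⁻¹ u`. -/
def IsTwoFactorPerm {V : Type*} (G : SimpleGraph V) (σ : Equiv.Perm V) : Prop :=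
  (∀ v, G.Adj v (σ v)) ∧ (∀ v, σ (σ v) ≠ v)

section Aux
open Equiv Equiv.Perm


variable {V : Type*} [Fintype V] [DecidableEq V]

/-- If every `σ`-step stays in a `τ`-cycle, then `σ`-cycles refine `τ`-cycles. -/
lemma sameCycle_of_step (σ τ : Perm V) (hstep : ∀ x, τ.SameCycle x (σ x)) :
    ∀ x y, σ.SameCycle x y → τ.SameCycle x y := by
  have key : ∀ (n : ℕ) (x : V), τ.SameCycle x ((σ ^ n) x) := by
    intro n
    induction n with
    | zero => intro x; simp [Equiv.Perm.SameCycle.refl]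
    | succ n ih =>
      intro x
      have h1 : (σ ^ (n + 1)) x = (σ ^ n) (σ x) := by
        rw [pow_succ]; rfl
      rw [h1]
      exact (hstep x).trans (ih (σ x))
  intro x y h
  obtain ⟨i, hi, rfl⟩ := h.exists_pow_eq'
  exact key i x

set_option linter.unusedSectionVars false

theorem Equiv.Perm.apply_inv_self {α : Type*} (f : Perm α) (x : α) : f (f⁻¹ x) = x :=
  f.apply_symm_apply x

theorem Equiv.Perm.inv_apply_self {α : Type*} (f : Perm α) (x : α) : f⁻¹ (f x) = x :=
  f.symm_apply_apply x

theorem Equiv.Perm.sameCycle_inv_apply_right {α : Type*} {f : Perm α} {x y : α} :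
    f.SameCycle x (f⁻¹ y) ↔ f.SameCycle x y :=
  Equiv.Perm.sameCycle_symm_apply_right

/-- Walking around the merged cycle: from `u` we reach `w` in `σ * swap u w`. -/
lemma walk_merge (σ : Perm V) (u w : V) (hfix : ∀ x, σ x ≠ x)
    (hne : ¬ σ.SameCycle u w) : (σ * Equiv.swap u w).SameCycle u w := by
  set τ := σ * Equiv.swap u w with hτ
  have hex : ∃ n, 0 < n ∧ (σ ^ n) w = w :=
    ⟨orderOf σ, orderOf_pos σ, by rw [pow_orderOf_eq_one]; rfl⟩
  classical
  set n := Nat.find hex with hn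
  obtain ⟨hnpos, hnw⟩ : 0 < n ∧ (σ ^ n) w = w := Nat.find_spec hex
  have key : ∀ k, 1 ≤ k → k ≤ n → (τ ^ k) u = (σ ^ k) w := by
    intro k
    induction k with
    | zero => omega
    | succ k ih =>
      intro _ hk1
      rcases Nat.eq_zero_or_pos k with hk0 | hkpos
      · subst hk0
        simp only [zero_add, pow_one, hτ, Equiv.Perm.mul_apply, Equiv.swap_apply_left]
      · have hkn : k < n := by omega
        have hih := ih hkpos (le_of_lt hkn)
        have h1 : (τ ^ (k + 1)) u = τ ((τ ^ k) u) := by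
          rw [pow_succ']; rfl
        have h2 : (σ ^ (k + 1)) w = σ ((σ ^ k) w) := by
          rw [pow_succ']; rfl
        rw [h1, hih, h2]
        have hw : (σ ^ k) w ≠ w := fun h => Nat.find_min hex hkn ⟨hkpos, h⟩
        have hu : (σ ^ k) w ≠ u := by
          intro h
          exact hne ((Equiv.Perm.SameCycle.symm ⟨(k : ℤ), by simpa using h⟩))
        simp only [hτ, Equiv.Perm.mul_apply]
        rw [Equiv.swap_apply_of_ne_of_ne hu hw]
  refine ⟨(n : ℤ), ?_⟩
  rw [zpow_natCast]
  rw [key n hnpos le_rfl, hnw]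

/-- If the cycle partition of `τ` is strictly coarser than that of `σ`,
then `τ` has strictly fewer cycles. -/
lemma card_cycleType_lt (σ τ : Perm V)
    (hfixσ : ∀ x, σ x ≠ x) (hfixτ : ∀ x, τ x ≠ x)
    (himp : ∀ x y, σ.SameCycle x y → τ.SameCycle x y)
    (u w : V) (hne : ¬ σ.SameCycle u w) (hyes : τ.SameCycle u w) :
    Multiset.card τ.cycleType < Multiset.card σ.cycleType := by
  classical
  have hcard : ∀ π : Perm V, Multiset.card π.cycleType = π.cycleFactorsFinset.card := by
    intro π
    rw [Equiv.Perm.cycleType, Multiset.card_map]; rfl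
  have hfac : ∀ (π : Perm V), (∀ x, π x ≠ x) →
      π.cycleFactorsFinset = Finset.univ.image π.cycleOf := by
    intro π hfix
    ext c
    simp only [Finset.mem_image, Finset.mem_univ, true_and]
    constructor
    · intro hc
      have hsupp : c.support.Nonempty := by
        have := (Equiv.Perm.mem_cycleFactorsFinset_iff.mp hc).1
        exact this.nonempty_support
      obtain ⟨a, ha⟩ := hsupp
      exact ⟨a, (Equiv.Perm.cycle_is_cycleOf ha hc).symm⟩
    · rintro ⟨a, rfl⟩
      exact Equiv.Perm.cycleOf_mem_cycleFactorsFinset_iff.mpr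
        (Equiv.Perm.mem_support.mpr (hfix a))
  -- the factoring function
  have hft : Function.FactorsThrough τ.cycleOf σ.cycleOf := by
    intro x y h
    have hy : σ.SameCycle x y := by
      have : y ∈ (σ.cycleOf y).support :=
        Equiv.Perm.mem_support_cycleOf_iff.mpr
          ⟨Equiv.Perm.SameCycle.refl _ _, Equiv.Perm.mem_support.mpr (hfixσ y)⟩
      rw [← h] at this
      exact (Equiv.Perm.mem_support_cycleOf_iff.mp this).1
    exact (himp x y hy).cycleOf_eq
  set F := Function.extend σ.cycleOf τ.cycleOf id with hF
  have hFap : ∀ x, F (σ.cycleOf x) = τ.cycleOf x := fun x => hft.extend_apply id x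
  have himage : τ.cycleFactorsFinset = σ.cycleFactorsFinset.image F := by
    rw [hfac σ hfixσ, hfac τ hfixτ, Finset.image_image]
    apply Finset.image_congr
    intro x _
    exact (hFap x).symm
  rw [hcard σ, hcard τ, himage]
  have hle := Finset.card_image_le (s := σ.cycleFactorsFinset) (f := F)
  rcases lt_or_eq_of_le hle with h | h
  · exact h
  · exfalso
    have hinj : Set.InjOn F σ.cycleFactorsFinset := Finset.injOn_of_card_image_eq h
    have hu_mem : σ.cycleOf u ∈ σ.cycleFactorsFinset := by
      rw [hfac σ hfixσ]; exact Finset.mem_image_of_mem _ (Finset.mem_univ u)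
    have hw_mem : σ.cycleOf w ∈ σ.cycleFactorsFinset := by
      rw [hfac σ hfixσ]; exact Finset.mem_image_of_mem _ (Finset.mem_univ w)
    have hFeq : F (σ.cycleOf u) = F (σ.cycleOf w) := by
      rw [hFap, hFap]; exact hyes.cycleOf_eq
    have : σ.cycleOf u = σ.cycleOf w := hinj hu_mem hw_mem hFeq
    apply hne
    have : u ∈ (σ.cycleOf w).support := by
      rw [← this]
      exact Equiv.Perm.mem_support_cycleOf_iff.mpr
        ⟨Equiv.Perm.SameCycle.refl _ _, Equiv.Perm.mem_support.mpr (hfixσ u)⟩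
    exact ((Equiv.Perm.mem_support_cycleOf_iff.mp this).1).symm

/-- The permutation obtained from `σ` by reversing the cycle through `v`. -/
def revAt (σ : Perm V) (v : V) : Perm V where
  toFun x := if σ.SameCycle v x then σ⁻¹ x else σ x
  invFun x := if σ.SameCycle v x then σ x else σ⁻¹ x
  left_inv x := by
    by_cases h : σ.SameCycle v x
    · simp only [if_pos h, if_pos (Equiv.Perm.sameCycle_inv_apply_right.mpr h),
        Equiv.Perm.apply_inv_self]
    · simp only [if_neg h, if_neg (fun hh => h (Equiv.Perm.sameCycle_apply_right.mp hh)),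
        Equiv.Perm.inv_apply_self]
  right_inv x := by
    by_cases h : σ.SameCycle v x
    · simp only [if_pos h, if_pos (Equiv.Perm.sameCycle_apply_right.mpr h),
        Equiv.Perm.inv_apply_self]
    · simp only [if_neg h, if_neg (fun hh => h (Equiv.Perm.sameCycle_inv_apply_right.mp hh)),
        Equiv.Perm.apply_inv_self]

lemma revAt_apply_of_sameCycle {σ : Perm V} {v x : V} (h : σ.SameCycle v x) :
    revAt σ v x = σ⁻¹ x := if_pos h

lemma revAt_apply_of_not_sameCycle {σ : Perm V} {v x : V} (h : ¬ σ.SameCycle v x) :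
    revAt σ v x = σ x := if_neg h

lemma sameCycle_revAt_iff (σ : Perm V) (v : V) (x y : V) :
    (revAt σ v).SameCycle x y ↔ σ.SameCycle x y := by
  constructor
  · apply sameCycle_of_step
    intro z
    by_cases h : σ.SameCycle v z
    · exact ⟨-1, by simp [revAt_apply_of_sameCycle h]⟩
    · exact ⟨1, by simp [revAt_apply_of_not_sameCycle h]⟩
  · apply sameCycle_of_step
    intro z
    by_cases h : σ.SameCycle v z
    · -- (revAt σ v) (σ z) = z, so SameCycle (revAt) z (σ z) via symm of ⟨1⟩
      have h2 : σ.SameCycle v (σ z) := Equiv.Perm.sameCycle_apply_right.mpr h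
      have : revAt σ v (σ z) = z := by
        rw [revAt_apply_of_sameCycle h2, Equiv.Perm.inv_apply_self]
      have h3 : (revAt σ v).SameCycle (σ z) z := ⟨1, by simpa using this⟩
      exact h3.symm
    · exact ⟨1, by simp [revAt_apply_of_not_sameCycle h]⟩

lemma twoFactor_fix {G : SimpleGraph V} {σ : Perm V} (h : IsTwoFactorPerm G σ) :
    ∀ x, σ x ≠ x := by
  intro x hx
  exact h.2 x (by rw [hx, hx])

lemma twoFactor_inv {G : SimpleGraph V} {σ : Perm V} (h : IsTwoFactorPerm G σ) :
    IsTwoFactorPerm G σ⁻¹ := by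
  constructor
  · intro x
    have := h.1 (σ⁻¹ x)
    rw [Equiv.Perm.apply_inv_self] at this
    exact this.symm
  · intro x hx
    have h2 : x = σ (σ x) := by simpa using congrArg (fun y => σ (σ y)) hx
    exact h.2 x h2.symm

lemma twoFactor_revAt {G : SimpleGraph V} {σ : Perm V} (h : IsTwoFactorPerm G σ) (v : V) :
    IsTwoFactorPerm G (revAt σ v) := by
  constructor
  · intro x
    by_cases hc : σ.SameCycle v x
    · rw [revAt_apply_of_sameCycle hc]
      exact (twoFactor_inv h).1 x
    · rw [revAt_apply_of_not_sameCycle hc]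
      exact h.1 x
  · intro x
    by_cases hc : σ.SameCycle v x
    · have hc2 : σ.SameCycle v (σ⁻¹ x) := Equiv.Perm.sameCycle_inv_apply_right.mpr hc
      rw [revAt_apply_of_sameCycle hc, revAt_apply_of_sameCycle hc2]
      exact (twoFactor_inv h).2 x
    · have hc2 : ¬ σ.SameCycle v (σ x) := fun hh => hc (Equiv.Perm.sameCycle_apply_right.mp hh)
      rw [revAt_apply_of_not_sameCycle hc, revAt_apply_of_not_sameCycle hc2]
      exact h.2 x

lemma merge_contra (G : SimpleGraph V) (σ π : Perm V)
    (hmin : ∀ τ : Perm V, IsTwoFactorPerm G τ →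
      Multiset.card σ.cycleType ≤ Multiset.card τ.cycleType)
    (hσfix : ∀ x, σ x ≠ x)
    (hπ : IsTwoFactorPerm G π)
    (hiff : ∀ x y, π.SameCycle x y ↔ σ.SameCycle x y)
    (u w : V) (hne : ¬ σ.SameCycle u w)
    (e1 : G.Adj u (π w)) (e2 : G.Adj w (π u)) : False := by
  have hπfix : ∀ x, π x ≠ x := twoFactor_fix hπ
  have hneπ : ¬ π.SameCycle u w := fun h => hne ((hiff _ _).mp h)
  have huw : u ≠ w := fun h => hneπ (h ▸ Equiv.Perm.SameCycle.refl π u)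
  set τ := π * Equiv.swap u w with hτdef
  have s1 : ∀ a : V, π.SameCycle a (π a) := fun a => ⟨1, by simp⟩
  have hτu : τ u = π w := by simp [hτdef]
  have hτw : τ w = π u := by simp [hτdef]
  have hτo : ∀ x, x ≠ u → x ≠ w → τ x = π x := by
    intro x h1 h2
    simp [hτdef, Equiv.swap_apply_of_ne_of_ne h1 h2]
  have hπwu : π w ≠ u := by
    intro h
    have hsc : π.SameCycle w u := ⟨1, by simpa using h⟩
    exact hneπ hsc.symm
  have hπuw : π u ≠ w := fun h => hneπ ⟨1, by simpa using h⟩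
  -- τ is a two-factor
  have hadj : ∀ x, G.Adj x (τ x) := by
    intro x
    by_cases h1 : x = u
    · rw [h1, hτu]; exact e1
    by_cases h2 : x = w
    · rw [h2, hτw]; exact e2
    · rw [hτo x h1 h2]; exact hπ.1 x
  have hno2 : ∀ x, τ (τ x) ≠ x := by
    intro x
    by_cases h1 : x = u
    · subst h1
      rw [hτu, hτo _ hπwu (hπfix w)]
      intro h
      refine hneπ ?_
      have := (s1 w).trans (s1 (π w))
      rw [h] at this
      exact this.symm
    by_cases h2 : x = w
    · subst h2
      rw [hτw, hτo _ (hπfix u) hπuw]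
      intro h
      refine hneπ ?_
      have := (s1 u).trans (s1 (π u))
      rwa [h] at this
    · rw [hτo x h1 h2]
      by_cases hp1 : π x = u
      · rw [hp1, hτu]
        intro h
        refine hneπ ?_
        have hxw : π.SameCycle w x := ⟨1, by simpa using h⟩
        have hxu : π.SameCycle x u := ⟨1, by simpa using hp1⟩
        exact (hxw.trans hxu).symm
      by_cases hp2 : π x = w
      · rw [hp2, hτw]
        intro h
        refine hneπ ?_
        have hux : π.SameCycle u x := ⟨1, by simpa using h⟩
        have hxw : π.SameCycle x w := ⟨1, by simpa using hp2⟩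
        exact hux.trans hxw
      · rw [hτo _ hp1 hp2]
        exact hπ.2 x
  have hτfac : IsTwoFactorPerm G τ := ⟨hadj, hno2⟩
  -- the merged permutation has strictly fewer cycles
  have walk : τ.SameCycle u w := walk_merge π u w hπfix hneπ
  have hstep : ∀ x, τ.SameCycle x (π x) := by
    intro x
    by_cases h1 : x = u
    · subst h1
      exact walk.trans ⟨1, by simpa using hτw⟩
    by_cases h2 : x = w
    · subst h2
      exact walk.symm.trans ⟨1, by simpa using hτu⟩
    · exact ⟨1, by simpa using hτo x h1 h2⟩
  have himp : ∀ x y, σ.SameCycle x y → τ.SameCycle x y := fun x y h =>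
    sameCycle_of_step π τ hstep x y ((hiff x y).mpr h)
  have hlt := card_cycleType_lt σ τ hσfix (twoFactor_fix hτfac) himp u w hne walk
  have hge := hmin τ hτfac
  omega


end Aux

/-- In a 2-factor with the minimum number `m ≥ 2` of cycles, if `u` and `v` lie
on different cycles and `uv` is an edge of `G`, then there is no edge between
the two cycle-neighbors of `u` and the two cycle-neighbors of `v`. -/
theorem min_two_factor_no_cross_edge {V : Type*} [Fintype V] [DecidableEq V]
    (G : SimpleGraph V) (σ : Equiv.Perm V) (hσ : IsTwoFactorPerm G σ)
    (hmin : ∀ τ : Equiv.Perm V, IsTwoFactorPerm G τ →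
      Multiset.card σ.cycleType ≤ Multiset.card τ.cycleType)
    (hm : 2 ≤ Multiset.card σ.cycleType)
    (u v : V) (huv : ¬ σ.SameCycle u v) (he : G.Adj u v) :
    ∀ a ∈ ({σ u, σ⁻¹ u} : Set V), ∀ b ∈ ({σ v, σ⁻¹ v} : Set V), ¬ G.Adj a b := by
  have hfix : ∀ x, σ x ≠ x := twoFactor_fix hσ
  have hvu : ¬ σ.SameCycle v u := fun h => huv h.symm
  intro a ha b hb hab
  simp only [Set.mem_insert_iff, Set.mem_singleton_iff] at ha hb
  rcases ha with rfl | rfl <;> rcases hb with rfl | rfl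
  · -- a = σ u, b = σ v : reverse the cycle of v
    refine merge_contra G σ (revAt σ v) hmin hfix (twoFactor_revAt hσ v)
      (sameCycle_revAt_iff σ v) u (σ v)
      (fun h => huv (Equiv.Perm.sameCycle_apply_right.mp h)) ?_ ?_
    · have : revAt σ v (σ v) = v := by
        rw [revAt_apply_of_sameCycle (Equiv.Perm.sameCycle_apply_right.mpr
          (Equiv.Perm.SameCycle.refl σ v)), Equiv.Perm.inv_apply_self]
      rw [this]; exact he
    · have : revAt σ v u = σ u := revAt_apply_of_not_sameCycle hvu
      rw [this]; exact hab.symm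
  · -- a = σ u, b = σ⁻¹ v
    refine merge_contra G σ σ hmin hfix hσ (fun _ _ => Iff.rfl) u (σ⁻¹ v)
      (fun h => huv (h.trans ⟨1, by simp⟩)) (by simpa using he) hab.symm
  · -- a = σ⁻¹ u, b = σ v
    refine merge_contra G σ σ hmin hfix hσ (fun _ _ => Iff.rfl) v (σ⁻¹ u)
      (fun h => huv (h.trans ⟨1, by simp⟩).symm) (by simpa using he.symm) hab
  · -- a = σ⁻¹ u, b = σ⁻¹ v : reverse the cycle of v in σ⁻¹
    have hvu' : ¬ (σ⁻¹).SameCycle v u := fun h => hvu (Equiv.Perm.sameCycle_inv.mp h)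
    refine merge_contra G σ (revAt σ⁻¹ v) hmin hfix
      (twoFactor_revAt (twoFactor_inv hσ) v)
      (fun x y => (sameCycle_revAt_iff σ⁻¹ v x y).trans Equiv.Perm.sameCycle_inv)
      u (σ⁻¹ v)
      (fun h => huv (Equiv.Perm.sameCycle_inv_apply_right.mp h)) ?_ ?_
    · have : revAt σ⁻¹ v (σ⁻¹ v) = v := by
        rw [revAt_apply_of_sameCycle (σ := σ⁻¹) (Equiv.Perm.sameCycle_apply_right.mpr
          (Equiv.Perm.SameCycle.refl σ⁻¹ v))]
        simp
      rw [this]; exact he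
    · have : revAt σ⁻¹ v u = σ⁻¹ u := revAt_apply_of_not_sameCycle hvu'
      rw [this]; exact hab.symm
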